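/- (Identity Principle on real-connected slice-domains) Let Ω ⊆ ℍ be a real-connected slice-domain and let f, g : Ω → ℍ be slice regular. If there exists I ∈ 𝕊 such that f and g coincide on a subset of Ω ∩ ℂ_I having an accumulation point in Ω ∩ ℂ_I, then f = g on all of Ω. -/

import Mathlib

noncomputable section

abbrev Hq := Quaternion ℝ

/-- The sphere of imaginary units of the quaternions. -/
def SphereS : Set Hq := {q | q ^ 2 = -1}

/-- The identification of `ℂ` with the slice plane `ℂ_I = ℝ + ℝI`. -/
def sliceEmb (I : Hq) : ℂ → Hq := fun z => (z.re : Hq) + (z.im : Hq) * I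

/-- The slice complex plane `ℂ_I = ℝ + ℝI`. -/
def sliceC (I : Hq) : Set Hq := Set.range (sliceEmb I)

/-- The slice-topology on the quaternions: the quotient topology induced by the
canonical map from the disjoint union of the slices, i.e. the supremum of the
topologies coinduced by the parametrizations of the slices. -/
def sliceTopology : TopologicalSpace Hq :=
  ⨆ I ∈ SphereS, TopologicalSpace.coinduced (sliceEmb I) inferInstance

/-- The real line inside the quaternions. -/
def realLine : Set Hq := Set.range (fun x : ℝ => (x : Hq))

/-- `g : ℂ → ℍ` (thought of as a function on the slice `ℂ_I`) is (left) holomorphic on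
`U`: real differentiable with `∂ₓ g + I ∂_y g = 0`. -/
def SliceHolomorphicOn (I : Hq) (g : ℂ → Hq) (U : Set ℂ) : Prop :=
  ∀ z ∈ U, ∃ L : ℂ →L[ℝ] Hq, HasFDerivAt g L z ∧ L 1 + I * L Complex.I = 0

/-- A function on a slice-open set is slice regular if it is holomorphic on each slice. -/
def SliceRegular (f : Hq → Hq) (Ω : Set Hq) : Prop :=
  ∀ I ∈ SphereS, SliceHolomorphicOn I (f ∘ sliceEmb I) (sliceEmb I ⁻¹' Ω)

/-- `K(m)` for `K ∈ 𝕊^N` (with `K 0 = 1` by convention) and `1 ≤ m ≤ 2^N`: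
`∏_{i=N}^{1} (K_i K_{i-1})^{m_i}` where `(m_N … m_1)₂` is the binary expansion of `m-1`. -/
def zetaTerm (K : ℕ → Hq) (N m : ℕ) : Hq :=
  ((List.range N).reverse.map
    (fun j => (K (j + 1) * K j) ^ (if Nat.testBit (m - 1) j then 1 else 0))).prod

/-- The matrix `σ_N` (0-indexed): entry `(i,j)` is `(-1)^{N+(j+1)}` if
`(i+1)+(j+1) = 2^N + 1`, and `0` otherwise. -/
def sigmaMat (N : ℕ) : Matrix (Fin (2 ^ N)) (Fin (2 ^ N)) ℝ :=
  Matrix.of fun i j =>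
    if (i : ℕ) + (j : ℕ) = 2 ^ N - 1 then (-1 : ℝ) ^ (N + (j : ℕ) + 1) else 0

def QOrth (I J : Hq) : Prop := (I * star J).re = 0

open Complex Filter Set Topology Quaternion

namespace SliceAux

lemma sphere_props {J : Hq} (hJ : J ∈ SphereS) :
    J.re = 0 ∧ J.imI ^ 2 + J.imJ ^ 2 + J.imK ^ 2 = 1 := by
  have h : J * J = -1 := by rw [← pow_two]; exact hJ
  obtain ⟨h1, h2, h3, h4⟩ := Quaternion.ext_iff.mp h
  simp only [Quaternion.re_mul, Quaternion.imI_mul, Quaternion.imJ_mul, Quaternion.imK_mul,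
    Quaternion.re_neg, Quaternion.re_one, Quaternion.imI_neg, Quaternion.imI_one,
    Quaternion.imJ_neg, Quaternion.imJ_one, Quaternion.imK_neg, Quaternion.imK_one,
    neg_zero] at h1 h2 h3 h4
  have hs : J.re * (J.imI ^ 2 + J.imJ ^ 2 + J.imK ^ 2) = 0 := by
    linear_combination (J.imI / 2) * h2 + (J.imJ / 2) * h3 + (J.imK / 2) * h4
  have hre : J.re = 0 := by
    have h5 : J.re * (J.re * J.re + 1) = 0 := by linear_combination J.re * h1 + hs
    rcases mul_eq_zero.mp h5 with h | h
    · exact h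
    · nlinarith [sq_nonneg J.re]
  exact ⟨hre, by nlinarith [h1, hre]⟩

lemma sliceEmb_re {J : Hq} (hJ : J ∈ SphereS) (z : ℂ) : (sliceEmb J z).re = z.re := by
  simp [sliceEmb, Quaternion.re_mul, (sphere_props hJ).1]

lemma sliceEmb_imI (J : Hq) (z : ℂ) : (sliceEmb J z).imI = z.im * J.imI := by
  simp [sliceEmb, Quaternion.imI_mul]

lemma sliceEmb_imJ (J : Hq) (z : ℂ) : (sliceEmb J z).imJ = z.im * J.imJ := by
  simp [sliceEmb, Quaternion.imJ_mul]

lemma sliceEmb_imK (J : Hq) (z : ℂ) : (sliceEmb J z).imK = z.im * J.imK := by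
  simp [sliceEmb, Quaternion.imK_mul]

lemma sliceEmb_real (J : Hq) (x : ℝ) : sliceEmb J (x : ℂ) = (x : Hq) := by
  simp [sliceEmb]

lemma sliceEmb_inj {J : Hq} (hJ : J ∈ SphereS) : Function.Injective (sliceEmb J) := by
  intro z w h
  obtain ⟨hre, hs⟩ := sphere_props hJ
  have h1 : z.re = w.re := by
    have := congrArg QuaternionAlgebra.re h
    rwa [sliceEmb_re hJ, sliceEmb_re hJ] at this
  have h2 : z.im * J.imI = w.im * J.imI := by
    have := congrArg QuaternionAlgebra.imI h; rwa [sliceEmb_imI, sliceEmb_imI] at this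
  have h3 : z.im * J.imJ = w.im * J.imJ := by
    have := congrArg QuaternionAlgebra.imJ h; rwa [sliceEmb_imJ, sliceEmb_imJ] at this
  have h4 : z.im * J.imK = w.im * J.imK := by
    have := congrArg QuaternionAlgebra.imK h; rwa [sliceEmb_imK, sliceEmb_imK] at this
  have h5 : (z.im - w.im) * (J.imI ^ 2 + J.imJ ^ 2 + J.imK ^ 2) = 0 := by
    linear_combination J.imI * h2 + J.imJ * h3 + J.imK * h4
  rw [hs, mul_one, sub_eq_zero] at h5
  exact Complex.ext h1 h5

lemma sliceEmb_im_eq_zero {J : Hq} (hJ : J ∈ SphereS) {z : ℂ} (h : ∃ x : ℝ, sliceEmb J z = (x : Hq)) :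
    z.im = 0 := by
  obtain ⟨hre, hs⟩ := sphere_props hJ
  obtain ⟨x, hx⟩ := h
  have h2 := congrArg QuaternionAlgebra.imI hx
  have h3 := congrArg QuaternionAlgebra.imJ hx
  have h4 := congrArg QuaternionAlgebra.imK hx
  rw [sliceEmb_imI] at h2; rw [sliceEmb_imJ] at h3; rw [sliceEmb_imK] at h4
  simp only [Quaternion.imI_coe, Quaternion.imJ_coe, Quaternion.imK_coe] at h2 h3 h4
  have h5 : z.im * (J.imI ^ 2 + J.imJ ^ 2 + J.imK ^ 2) = 0 := by
    linear_combination J.imI * h2 + J.imJ * h3 + J.imK * h4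
  rwa [hs, mul_one] at h5

lemma sliceEmb_add (J : Hq) (z w : ℂ) : sliceEmb J (z + w) = sliceEmb J z + sliceEmb J w := by
  simp only [sliceEmb, Complex.add_re, Complex.add_im]
  push_cast
  noncomm_ring

lemma sliceEmb_smul (J : Hq) (r : ℝ) (z : ℂ) : sliceEmb J (r • z) = r • sliceEmb J z := by
  simp only [sliceEmb, Complex.smul_re, Complex.smul_im, smul_eq_mul]

  rw [smul_add, ← Quaternion.coe_mul_eq_smul, ← Quaternion.coe_mul_eq_smul]
  push_cast
  noncomm_ring

lemma sliceEmb_mul {J : Hq} (hJ : J ∈ SphereS) (z w : ℂ) :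
    sliceEmb J (z * w) = sliceEmb J z * sliceEmb J w := by
  obtain ⟨hre, hs⟩ := sphere_props hJ
  rw [Quaternion.ext_iff]
  refine ⟨?_, ?_, ?_, ?_⟩ <;>
    simp only [Quaternion.re_mul, Quaternion.imI_mul, Quaternion.imJ_mul, Quaternion.imK_mul,
      sliceEmb_re hJ, sliceEmb_imI, sliceEmb_imJ, sliceEmb_imK, Complex.mul_re, Complex.mul_im]
  · linear_combination (z.im * w.im) * hs
  · ring
  · ring
  · ring

lemma sliceEmb_one (J : Hq) : sliceEmb J 1 = 1 := by simp [sliceEmb]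

lemma sliceEmb_norm {J : Hq} (hJ : J ∈ SphereS) (z : ℂ) : ‖sliceEmb J z‖ = ‖z‖ := by
  obtain ⟨hre, hs⟩ := sphere_props hJ
  have h2 : Quaternion.normSq (sliceEmb J z) = z.re ^ 2 + z.im ^ 2 := by
    rw [Quaternion.normSq_def']
    simp only [sliceEmb_re hJ, sliceEmb_imI, sliceEmb_imJ, sliceEmb_imK]
    linear_combination (z.im ^ 2) * hs
  have h1 : ‖sliceEmb J z‖ * ‖sliceEmb J z‖ = ‖z‖ * ‖z‖ := by
    rw [← Quaternion.normSq_eq_norm_mul_self, h2, Complex.norm_mul_self_eq_normSq,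
      Complex.normSq_apply]
    ring
  nlinarith [norm_nonneg (sliceEmb J z), norm_nonneg z, h1]
lemma neg_mem_sphere {J : Hq} (hJ : J ∈ SphereS) : -J ∈ SphereS := by
  have h : J ^ 2 = -1 := hJ
  show (-J) ^ 2 = -1
  rw [neg_sq, h]

lemma sliceEmb_neg (J : Hq) (z : ℂ) : sliceEmb (-J) z = sliceEmb J ((starRingEnd ℂ) z) := by
  simp only [sliceEmb, Complex.conj_re, Complex.conj_im]
  push_cast
  noncomm_ring

/-- Two different (non-opposite) slices only meet along the reals. -/
lemma cross_slice {J K : Hq} (hJ : J ∈ SphereS) (hK : K ∈ SphereS)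
    (hne : K ≠ J) (hne' : K ≠ -J) {z w : ℂ} (h : sliceEmb K w = sliceEmb J z) : z.im = 0 := by
  obtain ⟨hreJ, hsJ⟩ := sphere_props hJ
  obtain ⟨hreK, hsK⟩ := sphere_props hK
  by_contra him
  have h2 := congrArg QuaternionAlgebra.imI h
  have h3 := congrArg QuaternionAlgebra.imJ h
  have h4 := congrArg QuaternionAlgebra.imK h
  rw [sliceEmb_imI, sliceEmb_imI] at h2
  rw [sliceEmb_imJ, sliceEmb_imJ] at h3
  rw [sliceEmb_imK, sliceEmb_imK] at h4
  have hwim : w.im ≠ 0 := by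
    intro h0
    rw [h0, zero_mul] at h2 h3 h4
    have hz : z.im * z.im * (J.imI ^ 2 + J.imJ ^ 2 + J.imK ^ 2) = 0 := by
      linear_combination (-z.im * J.imI) * h2 + (-z.im * J.imJ) * h3 + (-z.im * J.imK) * h4
    rw [hsJ, mul_one] at hz
    exact him (by nlinarith [hz])
  set t : ℝ := z.im / w.im with ht
  have hKI : K.imI = t * J.imI := by rw [ht, div_mul_eq_mul_div, eq_div_iff hwim]; linarith [h2]
  have hKJ : K.imJ = t * J.imJ := by rw [ht, div_mul_eq_mul_div, eq_div_iff hwim]; linarith [h3]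
  have hKK : K.imK = t * J.imK := by rw [ht, div_mul_eq_mul_div, eq_div_iff hwim]; linarith [h4]
  have ht2 : t ^ 2 * (J.imI ^ 2 + J.imJ ^ 2 + J.imK ^ 2) = 1 := by
    linear_combination hsK - (K.imI + t * J.imI) * hKI - (K.imJ + t * J.imJ) * hKJ -
      (K.imK + t * J.imK) * hKK
  rw [hsJ, mul_one] at ht2
  have hcase : (t - 1) * (t + 1) = 0 := by linear_combination ht2
  rcases mul_eq_zero.mp hcase with hc | hc
  · have h1 : t = 1 := by linarith
    exact hne (Quaternion.ext_iff.mpr ⟨by rw [hreK, hreJ], by rw [hKI, h1, one_mul],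
      by rw [hKJ, h1, one_mul], by rw [hKK, h1, one_mul]⟩)
  · have h1 : t = -1 := by linarith
    refine hne' (Quaternion.ext_iff.mpr ⟨?_, ?_, ?_, ?_⟩) <;>
      simp only [Quaternion.re_neg, Quaternion.imI_neg, Quaternion.imJ_neg, Quaternion.imK_neg,
        hreK, hreJ, hKI, hKJ, hKK, h1, neg_zero] <;> ring

lemma mem_sphere_of {p : Hq} (h0 : p.re = 0) (h1 : p.imI ^ 2 + p.imJ ^ 2 + p.imK ^ 2 = 1) :
    p ∈ SphereS := by
  show p ^ 2 = -1
  rw [pow_two, Quaternion.ext_iff]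
  refine ⟨?_, ?_, ?_, ?_⟩ <;>
    simp only [Quaternion.re_mul, Quaternion.imI_mul, Quaternion.imJ_mul, Quaternion.imK_mul,
      Quaternion.re_neg, Quaternion.imI_neg, Quaternion.imJ_neg, Quaternion.imK_neg,
      Quaternion.re_one, Quaternion.imI_one, Quaternion.imJ_one, Quaternion.imK_one,
      h0, neg_zero, zero_mul, mul_zero]
  · linear_combination -h1
  · ring
  · ring
  · ring

lemma exists_slice (q : Hq) {I0 : Hq} (hI0 : I0 ∈ SphereS) :
    ∃ J ∈ SphereS, ∃ z : ℂ, sliceEmb J z = q := by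
  by_cases him : q.im = 0
  · refine ⟨I0, hI0, (q.re : ℂ), ?_⟩
    rw [sliceEmb_real]
    conv_rhs => rw [← Quaternion.re_add_im q]
    rw [him, add_zero]
  · set v := q.im with hv
    have hvre : v.re = 0 := q.re_im
    have hnv : ‖v‖ ≠ 0 := norm_ne_zero_iff.mpr him
    have hnormsq : v.imI ^ 2 + v.imJ ^ 2 + v.imK ^ 2 = ‖v‖ * ‖v‖ := by
      have h := Quaternion.normSq_eq_norm_mul_self v
      rw [Quaternion.normSq_def'] at h
      rw [← h, hvre]; ring
    refine ⟨‖v‖⁻¹ • v, ?_, ⟨q.re, ‖v‖⟩, ?_⟩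
    · refine mem_sphere_of ?_ ?_
      · show ‖v‖⁻¹ • v.re = 0
        rw [hvre, smul_zero]
      · show (‖v‖⁻¹ • v.imI) ^ 2 + (‖v‖⁻¹ • v.imJ) ^ 2 + (‖v‖⁻¹ • v.imK) ^ 2 = 1
        simp only [smul_eq_mul]
        field_simp
        linear_combination hnormsq
    · show ((q.re : ℝ) : Hq) + ((‖v‖ : ℝ) : Hq) * (‖v‖⁻¹ • v) = q
      rw [Quaternion.coe_mul_eq_smul, smul_smul, mul_inv_cancel₀ hnv, one_smul,
        Quaternion.re_add_im]

lemma isOpen_slice_iff {V : Set Hq} :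
    @IsOpen Hq sliceTopology V ↔ ∀ J ∈ SphereS, IsOpen (sliceEmb J ⁻¹' V) := by
  show IsOpen[⨆ J ∈ SphereS, TopologicalSpace.coinduced (sliceEmb J) inferInstance] V ↔ _
  simp only [isOpen_iSup_iff, isOpen_coinduced]

lemma open_diff_component {U : Set ℂ} (hU : IsOpen U) {x : ℂ} :
    IsOpen (U \ connectedComponentIn U x) := by
  rw [isOpen_iff_forall_mem_open]
  intro y hy
  refine ⟨connectedComponentIn U y, ?_, hU.connectedComponentIn, mem_connectedComponentIn hy.1⟩
  intro z hz
  refine ⟨connectedComponentIn_subset U y hz, fun hzC => hy.2 ?_⟩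
  have e1 : connectedComponentIn U y = connectedComponentIn U z := connectedComponentIn_eq hz
  have e2 : connectedComponentIn U x = connectedComponentIn U z := connectedComponentIn_eq hzC
  have e3 := e1.trans e2.symm
  exact e3 ▸ mem_connectedComponentIn hy.1

/-- Key "clopen" argument: if a connected component of `Ω ∩ ℂ_J` contains no real point,
then `Ω` is the image of that component. -/
lemma component_real_or_all (Ω : Set Hq) (hopen : @IsOpen Hq sliceTopology Ω)
    (hconn : @IsPreconnected Hq sliceTopology Ω) {J : Hq} (hJ : J ∈ SphereS)
    {x : ℂ} (hx : x ∈ sliceEmb J ⁻¹' Ω)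
    (hC : ∀ z ∈ connectedComponentIn (sliceEmb J ⁻¹' Ω) x, z.im ≠ 0) :
    Ω = sliceEmb J '' connectedComponentIn (sliceEmb J ⁻¹' Ω) x := by
  set U : Set ℂ := sliceEmb J ⁻¹' Ω with hUdef
  set C : Set ℂ := connectedComponentIn U x with hCdef
  set T : Set Hq := sliceEmb J '' C with hTdef
  have hUopen : IsOpen U := isOpen_slice_iff.mp hopen J hJ
  have hCopen : IsOpen C := hUopen.connectedComponentIn
  have hCsub : C ⊆ U := connectedComponentIn_subset U x
  have hTsub : T ⊆ Ω := by
    rintro _ ⟨z, hz, rfl⟩; exact hCsub hz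
  -- preimages of T
  have hpreJ : sliceEmb J ⁻¹' T = C := (sliceEmb_inj hJ).preimage_image C
  have hprenegJ : sliceEmb (-J) ⁻¹' T = (starRingEnd ℂ) ⁻¹' C := by
    ext w
    simp only [Set.mem_preimage, sliceEmb_neg, ← hpreJ]
  have hpreK : ∀ K ∈ SphereS, K ≠ J → K ≠ -J → sliceEmb K ⁻¹' T = ∅ := by
    intro K hK h1 h2
    ext w
    simp only [Set.mem_preimage, Set.mem_empty_iff_false, iff_false, hTdef]
    rintro ⟨z, hz, hzw⟩
    exact hC z hz (cross_slice hJ hK h1 h2 hzw.symm)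
  have hTopen : @IsOpen Hq sliceTopology T := by
    rw [isOpen_slice_iff]
    intro K hK
    by_cases h1 : K = J
    · rw [h1, hpreJ]; exact hCopen
    by_cases h2 : K = -J
    · rw [h2, hprenegJ]; exact hCopen.preimage Complex.continuous_conj
    · rw [hpreK K hK h1 h2]; exact isOpen_empty
  have hT2open : @IsOpen Hq sliceTopology (Ω \ T) := by
    rw [isOpen_slice_iff]
    intro K hK
    have : sliceEmb K ⁻¹' (Ω \ T) = (sliceEmb K ⁻¹' Ω) \ (sliceEmb K ⁻¹' T) := rfl
    rw [this]
    by_cases h1 : K = J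
    · rw [h1, hpreJ]; exact open_diff_component hUopen
    by_cases h2 : K = -J
    · rw [h2, hprenegJ]
      have : sliceEmb (-J) ⁻¹' Ω = (starRingEnd ℂ) ⁻¹' U := by
        ext w; simp only [Set.mem_preimage, sliceEmb_neg, hUdef]
      rw [this, ← Set.preimage_diff]
      exact (open_diff_component hUopen).preimage Complex.continuous_conj
    · rw [hpreK K hK h1 h2, Set.diff_empty]
      exact isOpen_slice_iff.mp hopen K hK
  -- connectedness argument
  have hTne : (Ω ∩ T).Nonempty :=
    ⟨sliceEmb J x, hTsub ⟨x, mem_connectedComponentIn hx, rfl⟩,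
      ⟨x, mem_connectedComponentIn hx, rfl⟩⟩
  by_contra hne'
  have hdiffne : (Ω ∩ (Ω \ T)).Nonempty := by
    rcases Set.eq_empty_or_nonempty (Ω \ T) with h | h
    · exact absurd (Set.Subset.antisymm (Set.diff_eq_empty.mp h) hTsub) hne'
    · exact ⟨h.choose, h.choose_spec.1, h.choose_spec⟩
  obtain ⟨y, _, hyT, hyD⟩ := hconn T (Ω \ T) hTopen hT2open
    (fun y hy => by
      by_cases h : y ∈ T
      · exact Set.mem_union_left _ h
      · exact Set.mem_union_right _ ⟨hy, h⟩)
    hTne hdiffne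
  exact hyD.2 hyT

/-- The sphere as a subtype. -/
def Sph : Type := {q : Hq // q ∈ SphereS}

/-- `ℍ` viewed as a complex vector space via left multiplication by the slice `ℂ_J`. -/
@[reducible, nolint unusedArguments]
def HS (_J : Sph) : Type := Hq

instance (J : Sph) : NormedAddCommGroup (HS J) := inferInstanceAs (NormedAddCommGroup Hq)

instance (J : Sph) : CompleteSpace (HS J) := inferInstanceAs (CompleteSpace Hq)

noncomputable instance (J : Sph) : Module ℂ (HS J) where
  smul z q := (sliceEmb J.1 z * q : Hq)
  one_smul q := by
    show sliceEmb J.1 1 * q = q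
    rw [sliceEmb_one, one_mul]
  mul_smul z w q := by
    show sliceEmb J.1 (z * w) * q = sliceEmb J.1 z * (sliceEmb J.1 w * q)
    rw [sliceEmb_mul J.2, mul_assoc]
  smul_add z a b := mul_add _ _ _
  smul_zero z := mul_zero _
  add_smul z w q := by
    show sliceEmb J.1 (z + w) * q = sliceEmb J.1 z * q + sliceEmb J.1 w * q
    rw [sliceEmb_add, add_mul]
  zero_smul q := by
    show sliceEmb J.1 0 * q = 0
    have : sliceEmb J.1 0 = 0 := by simp [sliceEmb]
    rw [this, zero_mul]

lemma HS_smul_def (J : Sph) (z : ℂ) (q : HS J) : z • q = (sliceEmb J.1 z * q : Hq) := rfl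

noncomputable instance (J : Sph) : NormedSpace ℂ (HS J) where
  norm_smul_le z q := by
    show ‖sliceEmb J.1 z * q‖ ≤ ‖z‖ * ‖q‖
    rw [norm_mul, sliceEmb_norm J.2]

lemma clm_decomp (L : ℂ →L[ℝ] Hq) (z : ℂ) : L z = z.re • L 1 + z.im • L Complex.I := by
  have hz : z = z.re • (1 : ℂ) + z.im • Complex.I := by
    apply Complex.ext <;> simp
  conv_lhs => rw [hz]
  rw [map_add, map_smul, map_smul]

/-- Upgrade the real derivative of a slice-holomorphic function to a `ℂ`-linear map. -/
noncomputable def toCLM (J : Sph) (L : ℂ →L[ℝ] Hq) (hL : L 1 + J.1 * L Complex.I = 0) :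
    ℂ →L[ℂ] HS J :=
  LinearMap.mkContinuous
    { toFun := fun z => (L z : HS J)
      map_add' := fun a b => map_add L a b
      map_smul' := fun c z => by
        show L (c * z) = (sliceEmb J.1 c * L z : Hq)
        have hJJ : J.1 * J.1 = -1 := by rw [← pow_two]; exact J.2
        have hLI : L Complex.I = J.1 * L 1 := by
          have h1 : J.1 * (L 1 + J.1 * L Complex.I) = 0 := by rw [hL, mul_zero]
          rw [mul_add, ← mul_assoc, hJJ, neg_one_mul, add_neg_eq_zero] at h1
          exact h1.symm
        rw [clm_decomp L (c * z), clm_decomp L z, hLI]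
        have hsE : sliceEmb J.1 c = c.re • (1 : Hq) + c.im • J.1 := by
          rw [sliceEmb, Quaternion.coe_mul_eq_smul]
          congr 1
          exact Algebra.algebraMap_eq_smul_one c.re
        have hJJA : J.1 * (J.1 * L 1) = -(L 1) := by
          rw [← mul_assoc, hJJ, neg_one_mul]
        rw [hsE, Complex.mul_re, Complex.mul_im, add_mul, mul_add, mul_add,
          smul_mul_assoc, smul_mul_assoc, smul_mul_assoc, smul_mul_assoc,
          one_mul, mul_smul_comm, mul_smul_comm]
        rw [one_mul, mul_smul_comm, hJJA]
        module
      }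
    ‖L‖ (fun z => L.le_opNorm z)
lemma analyticOnNhd_slice (J : Sph) (h : Hq → Hq) {U : Set ℂ} (hU : IsOpen U)
    (hh : ∀ z ∈ U, ∃ L : ℂ →L[ℝ] Hq,
      HasFDerivAt (h ∘ sliceEmb J.1) L z ∧ L 1 + J.1 * L Complex.I = 0) :
    AnalyticOnNhd ℂ (h ∘ sliceEmb J.1 : ℂ → HS J) U := by
  apply DifferentiableOn.analyticOnNhd _ hU
  intro z hz
  obtain ⟨L, hL, hcr⟩ := hh z hz
  have hD : HasFDerivAt (h ∘ sliceEmb J.1 : ℂ → HS J) (toCLM J L hcr) z :=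
    .of_isLittleO hL.isLittleO
  exact hD.differentiableAt.differentiableWithinAt

lemma eqOn_zero_component (J : Sph) (h : Hq → Hq) {U : Set ℂ} (hU : IsOpen U)
    (hh : ∀ z ∈ U, ∃ L : ℂ →L[ℝ] Hq,
      HasFDerivAt (h ∘ sliceEmb J.1) L z ∧ L 1 + J.1 * L Complex.I = 0)
    {z₀ : ℂ} (hz₀ : z₀ ∈ U) (hfreq : ∃ᶠ z in nhdsWithin z₀ {z₀}ᶜ, h (sliceEmb J.1 z) = 0) :
    ∀ z ∈ connectedComponentIn U z₀, h (sliceEmb J.1 z) = 0 := by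
  have hana : AnalyticOnNhd ℂ (h ∘ sliceEmb J.1 : ℂ → HS J) (connectedComponentIn U z₀) :=
    (analyticOnNhd_slice J h hU hh).mono (connectedComponentIn_subset U z₀)
  have := hana.eqOn_zero_of_preconnected_of_frequently_eq_zero
    isPreconnected_connectedComponentIn (mem_connectedComponentIn hz₀) hfreq
  intro z hz
  exact this hz

end SliceAux

open SliceAux

/-- Identity Principle on real-connected slice-domains. -/
theorem identity_principle (Ω : Set Hq)
    (hopen : @IsOpen Hq sliceTopology Ω)
    (hconn : @IsPreconnected Hq sliceTopology Ω)
    (hne : Ω.Nonempty)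
    (hreal : IsPreconnected ((fun x : ℝ => (x : Hq)) ⁻¹' Ω))
    (f g : Hq → Hq) (hf : SliceRegular f Ω) (hg : SliceRegular g Ω)
    (I : Hq) (hI : I ∈ SphereS) (S : Set ℂ) (hS : S ⊆ sliceEmb I ⁻¹' Ω)
    (z₀ : ℂ) (hz₀ : z₀ ∈ sliceEmb I ⁻¹' Ω) (hacc : AccPt z₀ (Filter.principal S))
    (heq : ∀ z ∈ S, f (sliceEmb I z) = g (sliceEmb I z)) :
    Set.EqOn f g Ω := by
  classical
  set F : Hq → Hq := fun q => f q - g q with hFdef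
  have hFcr : ∀ J, J ∈ SphereS → ∀ z ∈ sliceEmb J ⁻¹' Ω, ∃ L : ℂ →L[ℝ] Hq,
      HasFDerivAt (F ∘ sliceEmb J) L z ∧ L 1 + J * L Complex.I = 0 := by
    intro J hJ z hz
    obtain ⟨Lf, hLf, hcf⟩ := hf J hJ z hz
    obtain ⟨Lg, hLg, hcg⟩ := hg J hJ z hz
    refine ⟨Lf - Lg, hLf.sub hLg, ?_⟩
    rw [ContinuousLinearMap.sub_apply, ContinuousLinearMap.sub_apply, mul_sub]
    have habel : Lf 1 - Lg 1 + (J * Lf Complex.I - J * Lg Complex.I)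
        = (Lf 1 + J * Lf Complex.I) - (Lg 1 + J * Lg Complex.I) := by abel
    rw [habel, hcf, hcg, sub_zero]
  suffices hz : ∀ q ∈ Ω, F q = 0 by
    intro q hq
    exact sub_eq_zero.mp (hz q hq)
  have hUIopen : IsOpen (sliceEmb I ⁻¹' Ω) := isOpen_slice_iff.mp hopen I hI
  have hfreq₀ : ∃ᶠ z in nhdsWithin z₀ {z₀}ᶜ, F (sliceEmb I z) = 0 := by
    rw [frequently_nhdsWithin_iff]
    have h1 := (accPt_iff_frequently (x := z₀) (C := S)).mp hacc
    exact h1.mono (fun y hy => ⟨sub_eq_zero.mpr (heq y hy.2), hy.1⟩)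
  have hzero₀ := eqOn_zero_component ⟨I, hI⟩ F hUIopen (hFcr I hI) hz₀ hfreq₀
  by_cases hrc : ∃ u ∈ connectedComponentIn (sliceEmb I ⁻¹' Ω) z₀, u.im = 0
  swap
  · push_neg at hrc
    have hall := component_real_or_all Ω hopen hconn hI hz₀ hrc
    intro q hq
    rw [hall] at hq
    obtain ⟨w, hw, rfl⟩ := hq
    exact hzero₀ w hw
  obtain ⟨u₀, hu₀C, hu₀im⟩ := hrc
  set x₀ : ℝ := u₀.re with hx₀
  have hx₀u : (x₀ : ℂ) = u₀ := by
    apply Complex.ext <;> simp [hx₀, hu₀im]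
  set R : Set ℝ := (fun x : ℝ => (x : Hq)) ⁻¹' Ω with hR
  have hmemR : ∀ x : ℝ, x ∈ R ↔ (x : ℂ) ∈ sliceEmb I ⁻¹' Ω := by
    intro x
    rw [Set.mem_preimage, Set.mem_preimage, sliceEmb_real]
  set W : Set ℂ := {w | w ∈ sliceEmb I ⁻¹' Ω ∧
      ∀ u ∈ connectedComponentIn (sliceEmb I ⁻¹' Ω) w, F (sliceEmb I u) = 0} with hW
  set W' : Set ℂ := {w | w ∈ sliceEmb I ⁻¹' Ω ∧
      ¬ ∀ u ∈ connectedComponentIn (sliceEmb I ⁻¹' Ω) w, F (sliceEmb I u) = 0} with hW'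
  have hWopen : IsOpen W := by
    rw [isOpen_iff_forall_mem_open]
    rintro w ⟨hwU, hwz⟩
    refine ⟨connectedComponentIn (sliceEmb I ⁻¹' Ω) w, ?_, hUIopen.connectedComponentIn,
      mem_connectedComponentIn hwU⟩
    intro u hu
    have hcc := connectedComponentIn_eq hu
    exact ⟨connectedComponentIn_subset _ _ hu, by rw [← hcc]; exact hwz⟩
  have hW'open : IsOpen W' := by
    rw [isOpen_iff_forall_mem_open]
    rintro w ⟨hwU, hwz⟩
    refine ⟨connectedComponentIn (sliceEmb I ⁻¹' Ω) w, ?_, hUIopen.connectedComponentIn,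
      mem_connectedComponentIn hwU⟩
    intro u hu
    have hcc := connectedComponentIn_eq hu
    exact ⟨connectedComponentIn_subset _ _ hu, by rw [← hcc]; exact hwz⟩
  have hsub : R ⊆ (fun x : ℝ => (x : ℂ)) ⁻¹' W ∪ (fun x : ℝ => (x : ℂ)) ⁻¹' W' := by
    intro x hx
    by_cases hx2 : ∀ u ∈ connectedComponentIn (sliceEmb I ⁻¹' Ω) (x : ℂ), F (sliceEmb I u) = 0
    · exact Or.inl ⟨(hmemR x).mp hx, hx2⟩
    · exact Or.inr ⟨(hmemR x).mp hx, hx2⟩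
  have hx₀U : (x₀ : ℂ) ∈ sliceEmb I ⁻¹' Ω := by
    rw [hx₀u]
    exact connectedComponentIn_subset _ _ hu₀C
  have hAne : (R ∩ (fun x : ℝ => (x : ℂ)) ⁻¹' W).Nonempty := by
    refine ⟨x₀, (hmemR x₀).mpr hx₀U, hx₀U, ?_⟩
    intro u hu
    have hu2 : u ∈ connectedComponentIn (sliceEmb I ⁻¹' Ω) ((x₀ : ℝ) : ℂ) := hu
    rw [hx₀u] at hu2
    apply hzero₀ u
    rw [connectedComponentIn_eq hu₀C]
    exact hu2
  have hBempty : ¬ (R ∩ (fun x : ℝ => (x : ℂ)) ⁻¹' W').Nonempty := by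
    intro hBne
    obtain ⟨y, _, hyA, hyB⟩ := hreal _ _
      (hWopen.preimage Complex.continuous_ofReal) (hW'open.preimage Complex.continuous_ofReal)
      hsub hAne hBne
    exact hyB.2 hyA.2
  have hRzero : ∀ x ∈ R, F ((x : ℝ) : Hq) = 0 := by
    intro x hx
    have hxW : (x : ℂ) ∈ W := by
      rcases hsub hx with h | h
      · exact h
      · exact absurd ⟨x, hx, h⟩ hBempty
    have h2 := hxW.2 (x : ℂ) (mem_connectedComponentIn hxW.1)
    rwa [sliceEmb_real] at h2
  have hRopen : IsOpen R := by
    have hRe : R = (fun x : ℝ => (x : ℂ)) ⁻¹' (sliceEmb I ⁻¹' Ω) := by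
      ext x; exact hmemR x
    rw [hRe]
    exact hUIopen.preimage Complex.continuous_ofReal
  intro q hq
  obtain ⟨J, hJ, z, rfl⟩ := exists_slice q hI
  have hzU : z ∈ sliceEmb J ⁻¹' Ω := hq
  by_cases hc : ∃ u ∈ connectedComponentIn (sliceEmb J ⁻¹' Ω) z, u.im = 0
  · obtain ⟨u, huC, huim⟩ := hc
    set x : ℝ := u.re with hx
    have hxu : (x : ℂ) = u := by
      apply Complex.ext <;> simp [hx, huim]
    have hxR : x ∈ R := by
      rw [hR, Set.mem_preimage, ← sliceEmb_real J x, hxu]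
      exact connectedComponentIn_subset (sliceEmb J ⁻¹' Ω) z huC
    have hfreq : ∃ᶠ w in nhdsWithin u {u}ᶜ, F (sliceEmb J w) = 0 := by
      have hev : ∀ᶠ y in nhdsWithin x {x}ᶜ, F (sliceEmb J ((y : ℝ) : ℂ)) = 0 := by
        have hevR : ∀ᶠ y in nhds x, y ∈ R := hRopen.mem_nhds hxR
        refine eventually_nhdsWithin_of_eventually_nhds (hevR.mono ?_)
        intro y hy
        rw [sliceEmb_real]
        exact hRzero y hy
      have htend : Filter.Tendsto (fun y : ℝ => (y : ℂ)) (nhdsWithin x {x}ᶜ)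
          (nhdsWithin u {u}ᶜ) := by
        rw [tendsto_nhdsWithin_iff]
        constructor
        · have h3 : Filter.Tendsto (fun y : ℝ => (y : ℂ)) (nhds x) (nhds ((x : ℝ) : ℂ)) :=
            Complex.continuous_ofReal.tendsto x
          rw [hxu] at h3
          exact h3.mono_left nhdsWithin_le_nhds
        · refine eventually_mem_nhdsWithin.mono (fun y hy => ?_)
          simp only [Set.mem_compl_iff, Set.mem_singleton_iff] at hy ⊢
          intro h
          exact hy (Complex.ofReal_injective (h.trans hxu.symm))
      exact htend.frequently hev.frequently
    have hzero := eqOn_zero_component ⟨J, hJ⟩ F (isOpen_slice_iff.mp hopen J hJ) (hFcr J hJ)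
      (connectedComponentIn_subset _ _ huC) hfreq
    have hcc : connectedComponentIn (sliceEmb J ⁻¹' Ω) u
        = connectedComponentIn (sliceEmb J ⁻¹' Ω) z := (connectedComponentIn_eq huC).symm
    exact hzero z (by rw [hcc]; exact mem_connectedComponentIn hzU)
  · push_neg at hc
    have hall := component_real_or_all Ω hopen hconn hJ hzU hc
    exfalso
    have hx₀Ω : ((x₀ : ℝ) : Hq) ∈ Ω := by
      rw [← sliceEmb_real I x₀, hx₀u]
      exact connectedComponentIn_subset (sliceEmb I ⁻¹' Ω) z₀ hu₀C
    rw [hall] at hx₀Ω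
    obtain ⟨w, hw, hwx⟩ := hx₀Ω
    exact hc w hw (sliceEmb_im_eq_zero hJ ⟨x₀, hwx⟩)
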